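/- The purity of coherence of a full-rank density operator is nonnegative, and it is zero if and only if ρ commutes with H. -/

import Mathlib

open Matrix BigOperators
open scoped ComplexOrder

/-- Matrix element ⟨v|A|w⟩. -/
noncomputable def matElem {n : Type*} [Fintype n] (v : n → ℂ)
    (A : Matrix n n ℂ) (w : n → ℂ) : ℂ :=
  star v ⬝ᵥ A.mulVec w

/-- Energy variance ⟨ψ|H²|ψ⟩ − ⟨ψ|H|ψ⟩² of a (unit) vector ψ. -/
noncomputable def variance {n : Type*} [Fintype n] (H : Matrix n n ℂ) (v : n → ℂ) : ℝ :=
  (matElem v (H * H) v).re - ((matElem v H v).re) ^ 2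

/-- Quantum Fisher information computed from a spectral decomposition
`ρ = ∑ j, p j • |ψ j⟩⟨ψ j|`; terms with `p j + p k = 0` are omitted. -/
noncomputable def QFI {ι : Type*} [Fintype ι] {n : Type*} [Fintype n]
    (p : ι → ℝ) (ψ : ι → n → ℂ) (H : Matrix n n ℂ) : ℝ :=
  2 * ∑ j, ∑ k, if p j + p k = 0 then 0 else
    (p j - p k) ^ 2 / (p j + p k) * Complex.normSq (matElem (ψ j) H (ψ k))

/-- Outer product |v⟩⟨v| as a matrix. -/
noncomputable def outer {n : Type*} (v : n → ℂ) : Matrix n n ℂ :=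
  fun i j => v i * star (v j)

/-- Purity of coherence P_H(ρ) = Tr(H ρ² H ρ⁻¹) − Tr(ρ H²) (for invertible ρ). -/
noncomputable def PoC {n : Type*} [Fintype n] [DecidableEq n]
    (H ρ : Matrix n n ℂ) : ℝ :=
  ((H * ρ ^ 2 * H * ρ⁻¹).trace - (ρ * H ^ 2).trace).re

lemma trace_mul_conjTranspose_self_aux {d : ℕ} (B : Matrix (Fin d) (Fin d) ℂ) :
    0 ≤ ((B * Bᴴ).trace).re ∧ (((B * Bᴴ).trace).re = 0 → B = 0) := by
  have h2 : ((B * Bᴴ).trace).re = ∑ i, ∑ j, Complex.normSq (B i j) := by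
    have h1 : (B * Bᴴ).trace = ∑ i, ∑ j, (Complex.normSq (B i j) : ℂ) := by
      simp [Matrix.trace, Matrix.mul_apply, Matrix.conjTranspose_apply, Complex.mul_conj,
        Matrix.diag]
    rw [h1]; simp
  constructor
  · rw [h2]
    exact Finset.sum_nonneg fun i _ => Finset.sum_nonneg fun j _ => Complex.normSq_nonneg _
  · intro h
    rw [h2] at h
    ext i j
    have hi := (Finset.sum_eq_zero_iff_of_nonneg (fun i _ =>
      Finset.sum_nonneg fun j _ => Complex.normSq_nonneg _)).mp h i (Finset.mem_univ i)
    have hj := (Finset.sum_eq_zero_iff_of_nonneg (fun j _ =>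
      Complex.normSq_nonneg _)).mp hi j (Finset.mem_univ j)
    simpa using Complex.normSq_eq_zero.mp hj

/-- The purity of coherence of a full-rank density operator is nonnegative,
and it is zero iff ρ commutes with H. -/
theorem poc_nonneg_and_eq_zero_iff_commute {d : ℕ}
    (H ρ : Matrix (Fin d) (Fin d) ℂ) (hH : H.IsHermitian)
    (hρ : ρ.PosDef) (htr : ρ.trace = 1) :
    0 ≤ PoC H ρ ∧ (PoC H ρ = 0 ↔ ρ * H = H * ρ) := by
  set K : Matrix (Fin d) (Fin d) ℂ := H * ρ - ρ * H with hK
  have hdet : IsUnit ρ.det := hρ.det_pos.ne'.isUnit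
  have hKc : Kᴴ = ρ * H - H * ρ := by
    simp [hK, Matrix.conjTranspose_sub, Matrix.conjTranspose_mul, hH.eq, hρ.isHermitian.eq]
  have expand : K * ρ⁻¹ * Kᴴ =
      H * (ρ * H) - H * (H * ρ) - ρ * H * H + ρ * H * ρ⁻¹ * (H * ρ) := by
    rw [hKc, hK]
    rw [Matrix.sub_mul, Matrix.mul_nonsing_inv_cancel_right _ _ hdet]
    rw [Matrix.sub_mul, Matrix.mul_sub, Matrix.mul_sub]
    have : ρ * H * ρ⁻¹ * (ρ * H) = ρ * H * H := by
      rw [Matrix.mul_assoc (ρ * H) ρ⁻¹, Matrix.nonsing_inv_mul_cancel_left _ _ hdet]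
    rw [this]
    abel
  have key : (H * ρ ^ 2 * H * ρ⁻¹).trace - (ρ * H ^ 2).trace = (K * ρ⁻¹ * Kᴴ).trace := by
    rw [expand, Matrix.trace_add, Matrix.trace_sub, Matrix.trace_sub]
    have t1 : (H * (ρ * H)).trace = (ρ * H ^ 2).trace := by
      rw [← Matrix.mul_assoc, Matrix.trace_mul_cycle, pow_two, ← Matrix.mul_assoc,
        Matrix.trace_mul_comm, Matrix.mul_assoc]
    have t2 : (H * (H * ρ)).trace = (ρ * H ^ 2).trace := by
      rw [← Matrix.mul_assoc, Matrix.trace_mul_comm, pow_two]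
    have t3 : (ρ * H * H).trace = (ρ * H ^ 2).trace := by
      rw [pow_two, Matrix.mul_assoc]
    have t4 : (ρ * H * ρ⁻¹ * (H * ρ)).trace = (H * ρ ^ 2 * H * ρ⁻¹).trace := by
      rw [Matrix.trace_mul_comm]
      congr 1
      rw [pow_two]
      simp only [Matrix.mul_assoc]
    rw [t1, t2, t3, t4]
    ring
  have hPoC : PoC H ρ = ((K * ρ⁻¹ * Kᴴ).trace).re := by
    rw [PoC, key]
  open scoped MatrixOrder in
  set S : Matrix (Fin d) (Fin d) ℂ := CFC.sqrt ρ⁻¹ with hS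
  open scoped MatrixOrder in
  have hSh : Sᴴ = S := ((CFC.sqrt_nonneg ρ⁻¹).posSemidef).1.eq ▸ rfl
  open scoped MatrixOrder in
  have hS2 : S * S = ρ⁻¹ := CFC.sqrt_mul_sqrt_self ρ⁻¹ (hρ.inv.posSemidef).nonneg
  have hfac : K * ρ⁻¹ * Kᴴ = (K * S) * (K * S)ᴴ := by
    rw [Matrix.conjTranspose_mul, hSh,
      show K * ρ⁻¹ = K * (S * S) from by rw [hS2]]
    simp only [Matrix.mul_assoc]
  have haux := trace_mul_conjTranspose_self_aux (K * S)
  rw [hPoC, hfac]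
  refine ⟨haux.1, ?_, ?_⟩
  · intro h
    have hKS : K * S = 0 := haux.2 h
    have hKinv : K * ρ⁻¹ = 0 := by
      rw [← hS2, ← Matrix.mul_assoc, hKS, Matrix.zero_mul]
    have hK0 : K = 0 := by
      have := Matrix.nonsing_inv_mul_cancel_right ρ K hdet
      rw [hKinv, Matrix.zero_mul] at this
      exact this.symm
    have : H * ρ = ρ * H := by
      rwa [hK, sub_eq_zero] at hK0
    exact this.symm
  · intro h
    have hK0 : K = 0 := by rw [hK, h, sub_self]
    rw [hK0]
    simp
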